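/- arXiv:1511.05931 — 7 statements merged into one kernel-verified Lean document; each statement's English description precedes it below -/
import Mathlib

section
/- A Boolean function f : (Fin n → Bool) → Bool is monotone if and only if it is expressible as a term built from the variables using only conjunction and disjunction, together with the constants true and false. -/
/-- Syntactic terms built from variables, conjunction, disjunction, and the
constants true and false. -/
inductive MonoTerm (n : ℕ) : Type
  | var (i : Fin n) : MonoTerm n
  | tru : MonoTerm n
  | fls : MonoTerm n
  | and (s t : MonoTerm n) : MonoTerm n
  | or  (s t : MonoTerm n) : MonoTerm n

/-- Evaluation of such a term at a Boolean tuple. -/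
def MonoTerm.eval {n : ℕ} (t : MonoTerm n) (a : Fin n → Bool) : Bool :=
  match t with
  | .var i => a i
  | .tru => true
  | .fls => false
  | .and s t => s.eval a && t.eval a
  | .or s t => s.eval a || t.eval a

def MonoTerm.bigAnd {n : ℕ} : List (MonoTerm n) → MonoTerm n
  | [] => .tru
  | t :: ts => .and t (bigAnd ts)

def MonoTerm.bigOr {n : ℕ} : List (MonoTerm n) → MonoTerm n
  | [] => .fls
  | t :: ts => .or t (bigOr ts)

lemma MonoTerm.bigAnd_eval {n : ℕ} (l : List (MonoTerm n)) (a : Fin n → Bool) :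
    (bigAnd l).eval a = l.all (fun t => t.eval a) := by
  induction l with
  | nil => rfl
  | cons t ts ih => simp [bigAnd, eval, ih]

lemma MonoTerm.bigOr_eval {n : ℕ} (l : List (MonoTerm n)) (a : Fin n → Bool) :
    (bigOr l).eval a = l.any (fun t => t.eval a) := by
  induction l with
  | nil => rfl
  | cons t ts ih => simp [bigOr, eval, ih]

lemma MonoTerm.eval_mono {n : ℕ} (t : MonoTerm n) {a b : Fin n → Bool}
    (hab : ∀ i, a i ≤ b i) : t.eval a ≤ t.eval b := by
  induction t with
  | var i => exact hab i
  | tru => simp [eval]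
  | fls => simp [eval]
  | and s t ihs iht =>
    simp only [eval]
    revert ihs iht
    cases s.eval a <;> cases t.eval a <;> cases s.eval b <;> cases t.eval b <;> decide
  | or s t ihs iht =>
    simp only [eval]
    revert ihs iht
    cases s.eval a <;> cases t.eval a <;> cases s.eval b <;> cases t.eval b <;> decide

/-- A Boolean function is monotone iff it is expressible by a term
built from variables using only ∧, ∨ and the constants true, false. -/
theorem monotone_iff_and_or_expressible {n : ℕ} (f : (Fin n → Bool) → Bool) :
    (∀ a b : Fin n → Bool, (∀ i, a i ≤ b i) → f a ≤ f b) ↔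
      ∃ t : MonoTerm n, ∀ a : Fin n → Bool, t.eval a = f a := by
  constructor
  · intro hmono
    -- term for a fixed assignment a : conjunction of vars true in a
    let termOf : (Fin n → Bool) → MonoTerm n := fun a =>
      MonoTerm.bigAnd (((List.finRange n).filter (fun i => a i)).map .var)
    have htermOf : ∀ a b, (termOf a).eval b = true ↔ ∀ i, a i = true → b i = true := by
      intro a b
      simp [termOf, MonoTerm.bigAnd_eval, List.all_eq_true, MonoTerm.eval,
        List.mem_filter, List.mem_finRange]
      exact forall_congr' fun i => by cases a i <;> simp
    refine ⟨MonoTerm.bigOr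
      (((Finset.univ : Finset (Fin n → Bool)).toList.filter (fun a => f a)).map termOf), ?_⟩
    intro b
    rw [MonoTerm.bigOr_eval]
    rcases hb : f b with _ | _
    · -- f b = false : no disjunct true
      simp only [List.any_eq_false, List.mem_map, List.mem_filter]
      rintro t ⟨a, ⟨-, ha⟩, rfl⟩
      by_contra h
      rw [htermOf] at h
      have := hmono a b (fun i => by
        rcases hai : a i with _ | _
        · simp
        · simp [h i hai])
      rw [ha, hb] at this
      exact absurd this (by simp)
    · -- f b = true : the disjunct for b itself is true
      simp only [List.any_eq_true, List.mem_map, List.mem_filter]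
      exact ⟨termOf b, ⟨b, ⟨Finset.mem_toList.mpr (Finset.mem_univ b), hb⟩, rfl⟩,
        (htermOf b b).mpr (fun i h => h)⟩
  · rintro ⟨t, ht⟩ a b hab
    rw [← ht a, ← ht b]
    exact t.eval_mono hab
end

section
/- If f is a Boolean function that is a TFT-function, then there exist substitutions A_1,...,A_n, each drawn from {p1, p2, p1 ∨ p2, ⊥, ⊤}, such that the function (p1,p2) ↦ f(A_1,...,A_n) equals the function (p1,p2) ↦ (p1 → p2). -/
/-- Strict pointwise order on Boolean tuples. -/
def TupLT {n : ℕ} (a b : Fin n → Bool) : Prop :=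
  (∀ i, a i ≤ b i) ∧ a ≠ b

/-- If f is a TFT-function, then substituting suitable binary
functions from {p1, p2, p1 ∨ p2, ⊥, ⊤} for its arguments yields implication. -/
theorem TFT_yields_implication {n : ℕ} (f : (Fin n → Bool) → Bool)
    (hTFT : ∃ a b c : Fin n → Bool, TupLT a b ∧ TupLT b c ∧
        f a = true ∧ f b = false ∧ f c = true) :
    ∃ A : Fin n → (Bool → Bool → Bool),
      (∀ i, A i ∈ ({(fun p _ => p), (fun _ q => q), (fun p q => p || q),
                    (fun _ _ => false), (fun _ _ => true)} :
                    Set (Bool → Bool → Bool))) ∧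
      ∀ p q : Bool, f (fun i => A i p q) = (!p || q) := by
  obtain ⟨a, b, c, ⟨hab, _⟩, ⟨hbc, _⟩, hfa, hfb, hfc⟩ := hTFT
  refine ⟨fun i => if a i then (fun _ _ => true) else if c i = false then
      (fun _ _ => false) else if b i then (fun p q => p || q) else (fun _ q => q), ?_, ?_⟩
  · intro i
    simp only [Set.mem_insert_iff, Set.mem_singleton_iff]
    split_ifs <;> tauto
  · intro p q
    have key : ∀ X : Fin n → Bool,
        (X = a ∨ X = b ∨ X = c) → f X = true ∨ f X = false := by
      rintro X (rfl | rfl | rfl) <;> simp [hfa, hfb, hfc]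
    have ha : (fun i => (if a i then (fun _ _ : Bool => true) else if c i = false then
        (fun _ _ : Bool => false) else if b i then (fun p q : Bool => p || q)
        else (fun _ q : Bool => q)) p q) =
        (if p && !q then b else if q then c else a) := by
      funext i
      have h1 := hab i
      have h2 := hbc i
      revert h1 h2
      cases hA : a i <;> cases hB : b i <;> cases hC : c i <;>
        cases p <;> cases q <;> simp_all
    rw [ha]
    cases p <;> cases q <;> simp [hfa, hfb, hfc]
end

section
/- If f is a Boolean function that is an FTF-function, then there exist substitutions A_1,...,A_n, each drawn from {p1, p2, p1 ∧ p2, ⊥, ⊤}, such that the function (p1,p2) ↦ f(A_1,...,A_n) equals the function (p1,p2) ↦ (p1 ∧ ¬p2). -/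
/-- If f is an FTF-function, then substituting suitable binary
functions from {p1, p2, p1 ∧ p2, ⊥, ⊤} for its arguments yields p1 ∧ ¬p2. -/
theorem FTF_yields_and_not {n : ℕ} (f : (Fin n → Bool) → Bool)
    (hFTF : ∃ a b c : Fin n → Bool, TupLT a b ∧ TupLT b c ∧
        f a = false ∧ f b = true ∧ f c = false) :
    ∃ A : Fin n → (Bool → Bool → Bool),
      (∀ i, A i ∈ ({(fun p _ => p), (fun _ q => q), (fun p q => p && q),
                    (fun _ _ => false), (fun _ _ => true)} :
                    Set (Bool → Bool → Bool))) ∧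
      ∀ p q : Bool, f (fun i => A i p q) = (p && !q) := by
  obtain ⟨a, b, c, ⟨hab, _⟩, ⟨hbc, _⟩, hfa, hfb, hfc⟩ := hFTF
  refine ⟨fun i => if a i then (fun _ _ => true) else if b i then (fun p _ => p)
    else if c i then (fun p q => p && q) else (fun _ _ => false), ?_, ?_⟩
  · intro i
    by_cases h1 : a i <;> by_cases h2 : b i <;> by_cases h3 : c i <;>
      simp [h1, h2, h3, Set.mem_insert_iff]
  · have key : ∀ i, a i ≤ b i ∧ b i ≤ c i := fun i => ⟨hab i, hbc i⟩
    intro p q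
    cases p <;> cases q
    · convert hfa using 2
      funext i
      rcases key i with ⟨h1, h2⟩
      cases ha : a i <;> cases hb : b i <;> cases hc : c i <;>
        simp_all <;> exact absurd ‹(true:Bool) ≤ false› (by decide)
      rfl
    · convert hfa using 2
      funext i
      rcases key i with ⟨h1, h2⟩
      cases ha : a i <;> cases hb : b i <;> cases hc : c i <;>
        simp_all <;> exact absurd ‹(true:Bool) ≤ false› (by decide)
      rfl
    · convert hfb using 2
      funext i
      rcases key i with ⟨h1, h2⟩
      cases ha : a i <;> cases hb : b i <;> cases hc : c i <;>
        simp_all <;> exact absurd ‹(true:Bool) ≤ false› (by decide)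
      rfl
    · convert hfc using 2
      funext i
      rcases key i with ⟨h1, h2⟩
      cases ha : a i <;> cases hb : b i <;> cases hc : c i <;>
        simp_all <;> exact absurd ‹(true:Bool) ≤ false› (by decide)
      rfl
end

section
/- If f is a rest Boolean function (neither monotone nor anti-monotone), then there exist substitutions B_1,...,B_n ∈ {p1, ⊥, ⊤} making f(B_1,...,B_n) equal to the identity p1 ↦ p1, and substitutions C_1,...,C_n ∈ {p1, ⊥, ⊤} making f(C_1,...,C_n) equal to negation p1 ↦ ¬p1. -/
lemma subst_of_pair {n : ℕ} (f : (Fin n → Bool) → Bool) (a b : Fin n → Bool)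
    (hab : ∀ i, a i ≤ b i) :
    ∃ B : Fin n → (Bool → Bool),
      (∀ i, B i ∈ ({(fun p => p), (fun _ => false), (fun _ => true)} :
                    Set (Bool → Bool))) ∧
      (f (fun i => B i false) = f a ∧ f (fun i => B i true) = f b) := by
  refine ⟨fun i => if a i = b i then (fun _ => a i) else (fun p => p), ?_, ?_, ?_⟩
  · intro i
    by_cases h : a i = b i
    · show (if a i = b i then (fun _ => a i) else (fun p => p)) ∈ _
      rw [if_pos h, h]; cases b i <;> simp
    · simp [h]
  · congr 1
    funext i
    by_cases h : a i = b i
    · simp [h]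
    · have := hab i
      cases ha : a i <;> cases hb : b i <;> simp_all <;> exact absurd this (by decide)
  · congr 1
    funext i
    by_cases h : a i = b i
    · simp [h]
    · have := hab i
      cases ha : a i <;> cases hb : b i <;> simp_all <;> exact absurd this (by decide)

/-- If f is a rest function (neither monotone nor anti-monotone),
then substituting unary functions from {p1, ⊥, ⊤} can produce both the identity
and negation. -/
theorem rest_yields_id_and_not {n : ℕ} (f : (Fin n → Bool) → Bool)
    (hnotmono : ¬ ∀ a b : Fin n → Bool, (∀ i, a i ≤ b i) → f a ≤ f b)
    (hnotanti : ¬ ∀ a b : Fin n → Bool, (∀ i, a i ≤ b i) → f b ≤ f a) :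
    (∃ B : Fin n → (Bool → Bool),
      (∀ i, B i ∈ ({(fun p => p), (fun _ => false), (fun _ => true)} :
                    Set (Bool → Bool))) ∧
      ∀ p : Bool, f (fun i => B i p) = p) ∧
    (∃ C : Fin n → (Bool → Bool),
      (∀ i, C i ∈ ({(fun p => p), (fun _ => false), (fun _ => true)} :
                    Set (Bool → Bool))) ∧
      ∀ p : Bool, f (fun i => C i p) = !p) := by
  push_neg at hnotmono hnotanti
  obtain ⟨a, b, hab, hfab⟩ := hnotmono
  obtain ⟨c, d, hcd, hfcd⟩ := hnotanti
  have ha : f a = true ∧ f b = false := by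
    revert hfab; cases f a <;> cases f b <;> decide
  have hc : f c = false ∧ f d = true := by
    revert hfcd; cases f c <;> cases f d <;> decide
  constructor
  · obtain ⟨B, hBmem, hB0, hB1⟩ := subst_of_pair f c d hcd
    exact ⟨B, hBmem, fun p => by cases p <;> simp_all⟩
  · obtain ⟨C, hCmem, hC0, hC1⟩ := subst_of_pair f a b hab
    exact ⟨C, hCmem, fun p => by cases p <;> simp_all⟩
end

section
/- Every non-constant Boolean function f that is not an FTF-function can be written as a disjunction of terms, where each term is either a conjunction of (unnegated) variables or a conjunction of negated variables, with at least one term. -/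
/-- Every non-constant Boolean function that is not an FTF-function
is a disjunction of terms, each a nonempty conjunction of variables or a nonempty
conjunction of negated variables, with at least one term. -/
theorem nonFTF_DNF {n : ℕ} (f : (Fin n → Bool) → Bool)
    (hnc : ∃ a b : Fin n → Bool, f a ≠ f b)
    (hnFTF : ¬ ∃ a b c : Fin n → Bool, TupLT a b ∧ TupLT b c ∧
        f a = false ∧ f b = true ∧ f c = false) :
    ∃ (k m : ℕ) (P : Fin k → List (Fin n)) (Q : Fin m → List (Fin n)),
      k + m > 0 ∧
      (∀ g, P g ≠ []) ∧ (∀ h, Q h ≠ []) ∧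
      ∀ a : Fin n → Bool,
        f a = true ↔
          ((∃ g, ∀ i ∈ P g, a i = true) ∨ (∃ h, ∀ i ∈ Q h, a i = false)) := by
  classical
  obtain ⟨x, y, hxy⟩ := hnc
  have hfalse : ∃ z, f z = false := by
    cases hx : f x
    · exact ⟨x, hx⟩
    · cases hy : f y
      · exact ⟨y, hy⟩
      · exact absurd (hx.trans hy.symm) hxy
  have htrue : ∃ z, f z = true := by
    cases hx : f x
    · cases hy : f y
      · exact absurd (hx.trans hy.symm) hxy
      · exact ⟨y, hy⟩
    · exact ⟨x, hx⟩
  set SA : (Fin n → Bool) → Prop :=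
    fun b => f b = true ∧ ∀ c, TupLT b c → f c = true with hSAdef
  set SB : (Fin n → Bool) → Prop :=
    fun b => f b = true ∧ ∀ a, TupLT a b → f a = true with hSBdef
  have hsplit : ∀ a, f a = true → SA a ∨ SB a := by
    intro a ha
    by_contra h
    push_neg at h
    obtain ⟨hA, hB⟩ := h
    simp only [hSAdef, hSBdef, ha, true_and, not_forall, Bool.not_eq_true] at hA hB
    obtain ⟨c, hbc, hc⟩ := hA
    obtain ⟨z, hzb, hz⟩ := hB
    exact hnFTF ⟨z, a, c, hzb, hbc, hz, ha, hc⟩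
  have hA_ne : ∀ b, SA b → ∃ i, b i = true := by
    intro b hb
    by_contra h
    push_neg at h
    have hbf : ∀ i, b i = false := fun i => Bool.eq_false_iff.mpr (h i)
    obtain ⟨z, hz⟩ := hfalse
    by_cases hbz : b = z
    · rw [hbz] at hb; rw [hb.1] at hz; exact Bool.noConfusion hz
    · have := hb.2 z ⟨fun i => by rw [hbf i]; exact Bool.false_le _, hbz⟩
      rw [this] at hz; exact Bool.noConfusion hz
  have hB_ne : ∀ b, SB b → ∃ i, b i = false := by
    intro b hb
    by_contra h
    push_neg at h
    have hbt : ∀ i, b i = true := fun i => Bool.ne_false_iff.mp (h i)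
    obtain ⟨z, hz⟩ := hfalse
    by_cases hbz : z = b
    · rw [← hbz] at hb; rw [hb.1] at hz; exact Bool.noConfusion hz
    · have := hb.2 z ⟨fun i => by rw [hbt i]; exact Bool.le_true _, hbz⟩
      rw [this] at hz; exact Bool.noConfusion hz
  let TA := {b : Fin n → Bool // SA b}
  let TB := {b : Fin n → Bool // SB b}
  let eA : TA ≃ Fin (Fintype.card TA) := Fintype.equivFin TA
  let eB : TB ≃ Fin (Fintype.card TB) := Fintype.equivFin TB
  refine ⟨Fintype.card TA, Fintype.card TB,
    fun g => (List.finRange n).filter (fun i => (eA.symm g).1 i),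
    fun h => (List.finRange n).filter (fun i => !(eB.symm h).1 i),
    ?_, ?_, ?_, ?_⟩
  · obtain ⟨z, hz⟩ := htrue
    rcases hsplit z hz with h | h
    · have : 0 < Fintype.card TA := Fintype.card_pos_iff.mpr ⟨⟨z, h⟩⟩
      omega
    · have : 0 < Fintype.card TB := Fintype.card_pos_iff.mpr ⟨⟨z, h⟩⟩
      omega
  · intro g hg
    obtain ⟨i, hi⟩ := hA_ne _ (eA.symm g).2
    have : i ∈ (List.finRange n).filter (fun i => (eA.symm g).1 i) :=
      List.mem_filter.mpr ⟨List.mem_finRange i, by simp [hi]⟩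
    have hg' : (List.finRange n).filter (fun i => (eA.symm g).1 i) = [] := hg
    rw [hg'] at this
    exact absurd this (List.not_mem_nil (a := i))
  · intro h hh
    obtain ⟨i, hi⟩ := hB_ne _ (eB.symm h).2
    have : i ∈ (List.finRange n).filter (fun i => !(eB.symm h).1 i) :=
      List.mem_filter.mpr ⟨List.mem_finRange i, by simp [hi]⟩
    have hh' : (List.finRange n).filter (fun i => !(eB.symm h).1 i) = [] := hh
    rw [hh'] at this
    exact absurd this (List.not_mem_nil (a := i))
  · intro a
    constructor
    · intro ha
      rcases hsplit a ha with h | h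
      · refine Or.inl ⟨eA ⟨a, h⟩, ?_⟩
        intro i hi
        simp only [Equiv.symm_apply_apply] at hi
        simpa using (List.mem_filter.mp hi).2
      · refine Or.inr ⟨eB ⟨a, h⟩, ?_⟩
        intro i hi
        simp only [Equiv.symm_apply_apply] at hi
        simpa using (List.mem_filter.mp hi).2
    · rintro (⟨g, hg⟩ | ⟨h, hh⟩)
      · obtain ⟨hb1, hb2⟩ := (eA.symm g).2
        by_cases hba : (eA.symm g).1 = a
        · rw [← hba]; exact hb1
        · refine hb2 a ⟨?_, hba⟩
          intro i
          cases hbi : (eA.symm g).1 i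
          · exact Bool.false_le _
          · have : a i = true :=
              hg i (List.mem_filter.mpr ⟨List.mem_finRange i, by simp [hbi]⟩)
            rw [this]
      · obtain ⟨hb1, hb2⟩ := (eB.symm h).2
        by_cases hba : a = (eB.symm h).1
        · rw [hba]; exact hb1
        · refine hb2 a ⟨?_, hba⟩
          intro i
          cases hbi : (eB.symm h).1 i
          · have : a i = false :=
              hh i (List.mem_filter.mpr ⟨List.mem_finRange i, by simp [hbi]⟩)
            rw [this]
          · exact Bool.le_true _
end

section
/- Every non-constant Boolean function f that is not a TFT-function can be written as a conjunction of clauses, where each clause is either a disjunction of (unnegated) variables or a disjunction of negated variables, with at least one clause. -/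
/-- Every non-constant Boolean function that is not a TFT-function
is a conjunction of clauses, each a nonempty disjunction of variables or a
nonempty disjunction of negated variables, with at least one clause. -/
theorem nonTFT_CNF {n : ℕ} (f : (Fin n → Bool) → Bool)
    (hnc : ∃ a b : Fin n → Bool, f a ≠ f b)
    (hnTFT : ¬ ∃ a b c : Fin n → Bool, TupLT a b ∧ TupLT b c ∧
        f a = true ∧ f b = false ∧ f c = true) :
    ∃ (k m : ℕ) (P : Fin k → List (Fin n)) (Q : Fin m → List (Fin n)),
      k + m > 0 ∧
      (∀ g, P g ≠ []) ∧ (∀ h, Q h ≠ []) ∧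
      ∀ a : Fin n → Bool,
        f a = true ↔
          ((∀ g, ∃ i ∈ P g, a i = true) ∧ (∀ h, ∃ i ∈ Q h, a i = false)) := by
  classical
  obtain ⟨a0, b0, hab⟩ := hnc
  have hT : ∃ t, f t = true := by
    by_cases h : f a0 = true
    · exact ⟨a0, h⟩
    · exact ⟨b0, by revert hab h; cases f a0 <;> cases f b0 <;> simp⟩
  -- key: f x = true ↔ x is above a true point and below a true point
  have hkey : ∀ x, f x = true ↔
      (∃ a, f a = true ∧ ∀ i, a i ≤ x i) ∧ (∃ c, f c = true ∧ ∀ i, x i ≤ c i) := by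
    intro x
    constructor
    · intro hx; exact ⟨⟨x, hx, fun i => le_refl _⟩, ⟨x, hx, fun i => le_refl _⟩⟩
    · rintro ⟨⟨a, ha, hax⟩, ⟨c, hc, hxc⟩⟩
      by_contra hx
      have hx' : f x = false := by simpa using hx
      by_cases hax' : a = x
      · rw [hax'] at ha; simp [ha] at hx'
      by_cases hxc' : x = c
      · rw [hxc'] at hx'; simp [hc] at hx'
      exact hnTFT ⟨a, x, c, ⟨hax, hax'⟩, ⟨hxc, hxc'⟩, ha, hx', hc⟩
  -- characterization of the up-closure via clauses
  have hUiff : ∀ x : Fin n → Bool, (∃ a, f a = true ∧ ∀ i, a i ≤ x i) ↔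
      ∀ y : Fin n → Bool, ¬(∃ a, f a = true ∧ ∀ i, a i ≤ y i) → ∃ i, x i = true ∧ y i = false := by
    intro x
    constructor
    · rintro ⟨a, ha, hax⟩ y hy
      by_contra h
      push_neg at h
      apply hy
      refine ⟨a, ha, fun i => le_trans (hax i) ?_⟩
      have hhi := h i
      cases hyi : y i
      · cases hxi : x i
        · exact le_refl _
        · exact absurd hyi (hhi hxi)
      · exact Bool.le_true _
    · intro h
      by_contra hx
      obtain ⟨i, h1, h2⟩ := h x hx
      simp [h1] at h2
  have hDiff : ∀ x : Fin n → Bool, (∃ c, f c = true ∧ ∀ i, x i ≤ c i) ↔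
      ∀ y : Fin n → Bool, ¬(∃ c, f c = true ∧ ∀ i, y i ≤ c i) → ∃ i, x i = false ∧ y i = true := by
    intro x
    constructor
    · rintro ⟨c, hc, hxc⟩ y hy
      by_contra h
      push_neg at h
      apply hy
      refine ⟨c, hc, fun i => le_trans ?_ (hxc i)⟩
      have hhi := h i
      cases hyi : y i
      · exact Bool.false_le _
      · cases hxi : x i
        · exact absurd hyi (hhi hxi)
        · exact le_refl _
    · intro h
      by_contra hx
      obtain ⟨i, h1, h2⟩ := h x hx
      simp [h1] at h2
  let FU : Finset (Fin n → Bool) :=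
    Finset.univ.filter (fun y => ¬ ∃ a, f a = true ∧ ∀ i, a i ≤ y i)
  let FD : Finset (Fin n → Bool) :=
    Finset.univ.filter (fun y => ¬ ∃ c, f c = true ∧ ∀ i, y i ≤ c i)
  refine ⟨FU.card, FD.card,
    fun g => (List.finRange n).filter (fun i => (FU.equivFin.symm g).1 i == false),
    fun h => (List.finRange n).filter (fun i => (FD.equivFin.symm h).1 i == true),
    ?_, ?_, ?_, ?_⟩
  · -- k + m > 0
    by_contra hkm
    push_neg at hkm
    have hU0 : FU = ∅ := Finset.card_eq_zero.mp (by omega)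
    have hD0 : FD = ∅ := Finset.card_eq_zero.mp (by omega)
    have hall : ∀ x, f x = true := by
      intro x
      rw [hkey x]
      constructor
      · by_contra hUx
        have hm : x ∈ FU := Finset.mem_filter.mpr ⟨Finset.mem_univ _, hUx⟩
        simp [hU0] at hm
      · by_contra hDx
        have hm : x ∈ FD := Finset.mem_filter.mpr ⟨Finset.mem_univ _, hDx⟩
        simp [hD0] at hm
    exact hab (by rw [hall a0, hall b0])
  · -- positive clauses nonempty
    intro g
    have hyF : (FU.equivFin.symm g).1 ∈ FU := (FU.equivFin.symm g).2
    have hyU : ¬ ∃ a, f a = true ∧ ∀ i, a i ≤ (FU.equivFin.symm g).1 i :=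
      (Finset.mem_filter.mp hyF).2
    have hex : ∃ i, (FU.equivFin.symm g).1 i = false := by
      by_contra h
      push_neg at h
      obtain ⟨t, ht⟩ := hT
      refine hyU ⟨t, ht, fun i => ?_⟩
      rw [Bool.ne_false_iff.mp (h i)]
      exact Bool.le_true _
    obtain ⟨i, hi⟩ := hex
    exact List.ne_nil_of_mem (List.mem_filter.mpr ⟨List.mem_finRange i, by simp [hi]⟩)
  · -- negative clauses nonempty
    intro h
    have hyF : (FD.equivFin.symm h).1 ∈ FD := (FD.equivFin.symm h).2
    have hyD : ¬ ∃ c, f c = true ∧ ∀ i, (FD.equivFin.symm h).1 i ≤ c i :=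
      (Finset.mem_filter.mp hyF).2
    have hex : ∃ i, (FD.equivFin.symm h).1 i = true := by
      by_contra hc
      push_neg at hc
      obtain ⟨t, ht⟩ := hT
      refine hyD ⟨t, ht, fun i => ?_⟩
      rw [Bool.eq_false_iff.mpr (hc i)]
      exact Bool.false_le _
    obtain ⟨i, hi⟩ := hex
    exact List.ne_nil_of_mem (List.mem_filter.mpr ⟨List.mem_finRange i, by simp [hi]⟩)
  · -- the main equivalence
    intro x
    rw [hkey x, hUiff x, hDiff x]
    constructor
    · rintro ⟨h1, h2⟩
      constructor
      · intro g
        have hyF : (FU.equivFin.symm g).1 ∈ FU := (FU.equivFin.symm g).2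
        obtain ⟨i, hxi, hyi⟩ := h1 _ (Finset.mem_filter.mp hyF).2
        exact ⟨i, List.mem_filter.mpr ⟨List.mem_finRange i, by simp [hyi]⟩, hxi⟩
      · intro h
        have hyF : (FD.equivFin.symm h).1 ∈ FD := (FD.equivFin.symm h).2
        obtain ⟨i, hxi, hyi⟩ := h2 _ (Finset.mem_filter.mp hyF).2
        exact ⟨i, List.mem_filter.mpr ⟨List.mem_finRange i, by simp [hyi]⟩, hxi⟩
    · rintro ⟨h1, h2⟩
      constructor
      · intro y hy
        have hm : y ∈ FU := Finset.mem_filter.mpr ⟨Finset.mem_univ _, hy⟩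
        obtain ⟨i, hi, hxi⟩ := h1 (FU.equivFin ⟨y, hm⟩)
        simp only [Equiv.symm_apply_apply] at hi
        have hyt := (List.mem_filter.mp hi).2
        simp at hyt
        exact ⟨i, hxi, hyt⟩
      · intro y hy
        have hm : y ∈ FD := Finset.mem_filter.mpr ⟨Finset.mem_univ _, hy⟩
        obtain ⟨i, hi, hxi⟩ := h2 (FD.equivFin ⟨y, hm⟩)
        simp only [Equiv.symm_apply_apply] at hi
        have hyt := (List.mem_filter.mp hi).2
        simp at hyt
        exact ⟨i, hxi, hyt⟩
end

section
/- If predicates ψ_1,...,ψ_n on two models are invariant with respect to a relation A, and f is a non-constant anti-monotone Boolean function, then f(ψ_1,...,ψ_n) is invariant with respect to the inverse relation A⁻¹. -/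
/-- If the predicates ψᵢ are invariant with respect to A and f is
a non-constant anti-monotone Boolean function, then f(ψ₁,…,ψₙ) is invariant
with respect to the inverse relation A⁻¹. -/
theorem antimonotone_combination_invariant_inverse {U₁ U₂ : Type*} {n : ℕ}
    (A₁₂ : U₁ → U₂ → Prop) (A₂₁ : U₂ → U₁ → Prop)
    (ψ₁ : Fin n → U₁ → Bool) (ψ₂ : Fin n → U₂ → Bool)
    (f : (Fin n → Bool) → Bool)
    (hanti : ∀ a b : Fin n → Bool, (∀ i, a i ≤ b i) → f b ≤ f a)
    (hnc : ∃ a b : Fin n → Bool, f a ≠ f b)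
    -- invariance of each ψᵢ w.r.t. A
    (hinvA₁ : ∀ i u v, A₁₂ u v → ψ₁ i u = true → ψ₂ i v = true)
    (hinvA₂ : ∀ i v u, A₂₁ v u → ψ₂ i v = true → ψ₁ i u = true) :
    -- invariance of f(ψ₁,…,ψₙ) w.r.t. A⁻¹
    (∀ u v, A₂₁ v u →
        f (fun i => ψ₁ i u) = true → f (fun i => ψ₂ i v) = true) ∧
    (∀ v u, A₁₂ u v →
        f (fun i => ψ₂ i v) = true → f (fun i => ψ₁ i u) = true) := by
  constructor
  · intro u v h hf
    have := hanti (fun i => ψ₂ i v) (fun i => ψ₁ i u)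
      (fun i => by
        cases hb : ψ₂ i v
        · simp [hb]
        · simp [hinvA₂ i v u h hb])
    exact le_antisymm (by simp) (hf ▸ this)
  · intro v u h hf
    have := hanti (fun i => ψ₁ i u) (fun i => ψ₂ i v)
      (fun i => by
        cases hb : ψ₁ i u
        · simp [hb]
        · simp [hinvA₁ i u v h hb])
    exact le_antisymm (by simp) (hf ▸ this)
end
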